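/- arXiv:2308.16172 — 4 statements merged into one kernel-verified Lean document; each statement's English description precedes it below -/
import Mathlib

section
/- Let G be a finite simple graph with vertex set V, let w : V → (0,∞) be weights, let y, θ* : V → ℝ, and let V_n > 0 satisfy ‖∇_G θ*‖₁ ≤ V_n. Suppose θ̂ minimizes Σ_{v∈V} w_v (y_v − θ_v)² over {θ : V → ℝ : ‖∇_G θ‖₁ ≤ V_n}, and write ζ := y − θ*. If ‖θ̂ − θ*‖_w > η for some η > 0, then there exists Δ : V → ℝ with ‖Δ‖_w = η and ‖∇_G Δ‖₁ ≤ 2 V_n such that Σ_{v∈V} w_v Δ_v ζ_v ≥ η²/2; in particular, sup{ Σ_{v∈V} w_v Δ_v ζ_v : Δ : V → ℝ, ‖Δ‖_w ≤ η, ‖∇_G Δ‖₁ ≤ 2 V_n } ≥ η²/2. -/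
open Finset

/-- Total variation of a signal `θ` along a finite simple graph `G`. -/
noncomputable def gradTV {V : Type*} [Fintype V] [DecidableEq V]
    (G : SimpleGraph V) [DecidableRel G.Adj] (θ : V → ℝ) : ℝ :=
  ∑ e ∈ G.edgeFinset,
    Sym2.lift ⟨fun u w => |θ u - θ w|, fun u w => abs_sub_comm (θ u) (θ w)⟩ e

/-- Weighted norm `‖Δ‖_w = (Σ_v w_v Δ_v²)^{1/2}`. -/
noncomputable def wNorm {V : Type*} [Fintype V] (w : V → ℝ) (Δ : V → ℝ) : ℝ :=
  Real.sqrt (∑ v, w v * Δ v ^ 2)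

lemma gradTV_nonneg {V : Type*} [Fintype V] [DecidableEq V]
    (G : SimpleGraph V) [DecidableRel G.Adj] (θ : V → ℝ) : 0 ≤ gradTV G θ := by
  apply Finset.sum_nonneg
  intro e he
  induction e using Sym2.ind with
  | _ u v => simp

lemma gradTV_smul {V : Type*} [Fintype V] [DecidableEq V]
    (G : SimpleGraph V) [DecidableRel G.Adj] (c : ℝ) (θ : V → ℝ) :
    gradTV G (fun v => c * θ v) = |c| * gradTV G θ := by
  unfold gradTV
  rw [Finset.mul_sum]
  apply Finset.sum_congr rfl
  intro e he
  induction e using Sym2.ind with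
  | _ u v => simp [← mul_sub, abs_mul]

lemma gradTV_add_le {V : Type*} [Fintype V] [DecidableEq V]
    (G : SimpleGraph V) [DecidableRel G.Adj] (f g : V → ℝ) :
    gradTV G (fun v => f v + g v) ≤ gradTV G f + gradTV G g := by
  unfold gradTV
  rw [← Finset.sum_add_distrib]
  apply Finset.sum_le_sum
  intro e he
  induction e using Sym2.ind with
  | _ u v =>
    simp only [Sym2.lift_mk]
    have : f u + g u - (f v + g v) = (f u - f v) + (g u - g v) := by ring
    rw [this]; exact abs_add_le _ _

/-- Peeling reduction for the constrained graph fused lasso: if the estimation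
error exceeds `η`, then some feasible increment `Δ` of weighted norm exactly `η`
and graph total variation at most `2 Vₙ` has a large inner product with the noise;
in particular, the supremum of the noise process over the feasible set is at
least `η²/2`. -/
theorem constrained_fused_lasso_peeling
    {V : Type*} [Fintype V] [DecidableEq V]
    (G : SimpleGraph V) [DecidableRel G.Adj]
    (w : V → ℝ) (hw : ∀ v, 0 < w v)
    (y θstar θhat : V → ℝ) (Vn : ℝ) (hVn : 0 < Vn)
    (hθstar : gradTV G θstar ≤ Vn)
    (hfeas : gradTV G θhat ≤ Vn)
    (hmin : ∀ θ : V → ℝ, gradTV G θ ≤ Vn →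
      ∑ v, w v * (y v - θhat v) ^ 2 ≤ ∑ v, w v * (y v - θ v) ^ 2)
    (η : ℝ) (hη : 0 < η)
    (hbig : η < wNorm w (fun v => θhat v - θstar v)) :
    (∃ Δ : V → ℝ, wNorm w Δ = η ∧ gradTV G Δ ≤ 2 * Vn ∧
      η ^ 2 / 2 ≤ ∑ v, w v * Δ v * (y v - θstar v)) ∧
    η ^ 2 / 2 ≤ sSup {s : ℝ | ∃ Δ : V → ℝ, wNorm w Δ ≤ η ∧ gradTV G Δ ≤ 2 * Vn ∧
      s = ∑ v, w v * Δ v * (y v - θstar v)} := by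
  set A : ℝ := ∑ v, w v * (θhat v - θstar v) ^ 2 with hAdef
  set B : ℝ := ∑ v, w v * (θhat v - θstar v) * (y v - θstar v) with hBdef
  set N : ℝ := wNorm w (fun v => θhat v - θstar v) with hNdef
  have hA0 : 0 ≤ A := Finset.sum_nonneg fun v _ => mul_nonneg (hw v).le (sq_nonneg _)
  have hNpos : 0 < N := hη.trans hbig
  have hA : N ^ 2 = A := Real.sq_sqrt hA0
  set t : ℝ := η / N with htdef
  have ht0 : 0 < t := div_pos hη hNpos
  have ht1 : t < 1 := (div_lt_one hNpos).2 hbig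
  have htN : t * N = η := div_mul_cancel₀ η hNpos.ne'
  -- total variation of the difference
  have hD : gradTV G (fun v => θhat v - θstar v) ≤ 2 * Vn := by
    have heq : (fun v => θhat v - θstar v) = fun v => θhat v + (-1 : ℝ) * θstar v := by
      funext v; ring
    rw [heq]
    calc gradTV G (fun v => θhat v + (-1 : ℝ) * θstar v)
        ≤ gradTV G θhat + gradTV G (fun v => (-1 : ℝ) * θstar v) := gradTV_add_le G _ _
      _ = gradTV G θhat + gradTV G θstar := by rw [gradTV_smul]; norm_num
      _ ≤ 2 * Vn := by linarith
  -- the intermediate point is feasible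
  set θt : V → ℝ := fun v => θstar v + t * (θhat v - θstar v) with hθtdef
  have hθtfeas : gradTV G θt ≤ Vn := by
    have heq : θt = fun v => (1 - t) * θstar v + t * θhat v := by
      funext v; simp only [hθtdef]; ring
    have h1 : gradTV G θt ≤ |1 - t| * gradTV G θstar + |t| * gradTV G θhat := by
      rw [heq]
      calc gradTV G (fun v => (1 - t) * θstar v + t * θhat v)
          ≤ gradTV G (fun v => (1 - t) * θstar v) + gradTV G (fun v => t * θhat v) :=
            gradTV_add_le G _ _
        _ = |1 - t| * gradTV G θstar + |t| * gradTV G θhat := by rw [gradTV_smul, gradTV_smul]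
    rw [abs_of_nonneg (by linarith), abs_of_nonneg ht0.le] at h1
    have h2 : (1 - t) * gradTV G θstar ≤ (1 - t) * Vn :=
      mul_le_mul_of_nonneg_left hθstar (by linarith)
    have h3 : t * gradTV G θhat ≤ t * Vn := mul_le_mul_of_nonneg_left hfeas ht0.le
    nlinarith
  -- basic inequality
  have hbasic := hmin θt hθtfeas
  have hkey : (1 - t ^ 2) * A ≤ 2 * (1 - t) * B := by
    have hsum : ∑ v, (w v * (y v - θhat v) ^ 2 - w v * (y v - θt v) ^ 2)
        = (1 - t ^ 2) * A - 2 * (1 - t) * B := by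
      rw [hAdef, hBdef, Finset.mul_sum, Finset.mul_sum, ← Finset.sum_sub_distrib]
      apply Finset.sum_congr rfl
      intro v _
      simp only [hθtdef]
      ring
    rw [Finset.sum_sub_distrib] at hsum
    linarith
  have hB : (1 + t) * A ≤ 2 * B := by nlinarith
  -- the increment
  refine ⟨⟨fun v => t * (θhat v - θstar v), ?_, ?_, ?_⟩, ?_⟩
  · -- norm is exactly η
    show Real.sqrt (∑ v, w v * (t * (θhat v - θstar v)) ^ 2) = η
    have : ∑ v, w v * (t * (θhat v - θstar v)) ^ 2 = t ^ 2 * A := by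
      rw [hAdef, Finset.mul_sum]
      exact Finset.sum_congr rfl fun v _ => by ring
    rw [this, Real.sqrt_mul (sq_nonneg t), Real.sqrt_sq ht0.le, ← hA,
      Real.sqrt_sq hNpos.le, htN]
  · -- total variation bound
    have := gradTV_smul G t (fun v => θhat v - θstar v)
    rw [this, abs_of_nonneg ht0.le]
    calc t * gradTV G (fun v => θhat v - θstar v) ≤ 1 * (2 * Vn) := by
          apply mul_le_mul ht1.le hD ?_ (by norm_num)
          · exact gradTV_nonneg G _
      _ = 2 * Vn := one_mul _
  · -- inner product lower bound
    have hsum : ∑ v, w v * (t * (θhat v - θstar v)) * (y v - θstar v) = t * B := by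
      rw [hBdef, Finset.mul_sum]
      exact Finset.sum_congr rfl fun v _ => by ring
    rw [hsum]
    have h1 : t * ((1 + t) * A) ≤ t * (2 * B) := mul_le_mul_of_nonneg_left hB ht0.le
    nlinarith [sq_nonneg t, mul_pos ht0 hNpos]
  · -- supremum bound
    set ζn : ℝ := wNorm w (fun v => y v - θstar v) with hζdef
    have hCS : ∀ Δ : V → ℝ, ∑ v, w v * Δ v * (y v - θstar v) ≤ wNorm w Δ * ζn := by
      intro Δ
      have h := Real.sum_mul_le_sqrt_mul_sqrt Finset.univ
        (fun v => Real.sqrt (w v) * Δ v) (fun v => Real.sqrt (w v) * (y v - θstar v))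
      have hl : ∑ v, (Real.sqrt (w v) * Δ v) * (Real.sqrt (w v) * (y v - θstar v))
          = ∑ v, w v * Δ v * (y v - θstar v) := by
        apply Finset.sum_congr rfl
        intro v _
        have hs : Real.sqrt (w v) * Real.sqrt (w v) = w v := Real.mul_self_sqrt (hw v).le
        linear_combination (Δ v * (y v - θstar v)) * hs
      have hr1 : ∑ v, (Real.sqrt (w v) * Δ v) ^ 2 = ∑ v, w v * Δ v ^ 2 := by
        apply Finset.sum_congr rfl
        intro v _
        rw [mul_pow, Real.sq_sqrt (hw v).le]
      have hr2 : ∑ v, (Real.sqrt (w v) * (y v - θstar v)) ^ 2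
          = ∑ v, w v * (y v - θstar v) ^ 2 := by
        apply Finset.sum_congr rfl
        intro v _
        rw [mul_pow, Real.sq_sqrt (hw v).le]
      rw [hl, hr1, hr2] at h
      exact h
    have hbdd : BddAbove {s : ℝ | ∃ Δ : V → ℝ, wNorm w Δ ≤ η ∧ gradTV G Δ ≤ 2 * Vn ∧
        s = ∑ v, w v * Δ v * (y v - θstar v)} := by
      refine ⟨η * ζn, ?_⟩
      rintro s ⟨Δ, h1, _, rfl⟩
      exact (hCS Δ).trans (mul_le_mul_of_nonneg_right h1 (Real.sqrt_nonneg _))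
    -- the witness from part 1 again
    set Δ0 : V → ℝ := fun v => t * (θhat v - θstar v) with hΔ0def
    have hnorm : wNorm w Δ0 = η := by
      show Real.sqrt (∑ v, w v * (t * (θhat v - θstar v)) ^ 2) = η
      have : ∑ v, w v * (t * (θhat v - θstar v)) ^ 2 = t ^ 2 * A := by
        rw [hAdef, Finset.mul_sum]
        exact Finset.sum_congr rfl fun v _ => by ring
      rw [this, Real.sqrt_mul (sq_nonneg t), Real.sqrt_sq ht0.le, ← hA,
        Real.sqrt_sq hNpos.le, htN]
    have htv : gradTV G Δ0 ≤ 2 * Vn := by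
      have := gradTV_smul G t (fun v => θhat v - θstar v)
      rw [hΔ0def, this, abs_of_nonneg ht0.le]
      calc t * gradTV G (fun v => θhat v - θstar v) ≤ 1 * (2 * Vn) := by
            apply mul_le_mul ht1.le hD ?_ (by norm_num)
            · exact gradTV_nonneg G _
        _ = 2 * Vn := one_mul _
    have hmem : (∑ v, w v * Δ0 v * (y v - θstar v)) ∈
        {s : ℝ | ∃ Δ : V → ℝ, wNorm w Δ ≤ η ∧ gradTV G Δ ≤ 2 * Vn ∧
          s = ∑ v, w v * Δ v * (y v - θstar v)} :=
      ⟨Δ0, hnorm.le, htv, rfl⟩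
    have hlow : η ^ 2 / 2 ≤ ∑ v, w v * Δ0 v * (y v - θstar v) := by
      have hsum : ∑ v, w v * Δ0 v * (y v - θstar v) = t * B := by
        rw [hBdef, Finset.mul_sum]
        exact Finset.sum_congr rfl fun v _ => by ring
      rw [hsum]
      have h1 : t * ((1 + t) * A) ≤ t * (2 * B) := mul_le_mul_of_nonneg_left hB ht0.le
      nlinarith [sq_nonneg t, mul_pos ht0 hNpos]
    exact hlow.trans (le_csSup hbdd hmem)
end

section
/- Let G be a finite simple graph with vertex set V, let w : V → (0,∞) be weights, let y, θ* : V → ℝ with ‖∇_G θ*‖₁ > 0, let η > 0, and set λ := η² / (4 ‖∇_G θ*‖₁). Suppose θ̂ minimizes Σ_{v∈V} w_v (y_v − θ_v)² + λ ‖∇_G θ‖₁ over all θ : V → ℝ, and write ζ := y − θ*. Assume ‖θ̂ − θ*‖_w > η and that every convex combination θ = t·θ̂ + (1−t)·θ* (t ∈ [0,1]) with ‖θ − θ*‖_w ≤ η satisfies ‖∇_G θ‖₁ < 5 ‖∇_G θ*‖₁. Then there exists Δ : V → ℝ with ‖Δ‖_w = η and ‖∇_G Δ‖₁ ≤ 6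 ‖∇_G θ*‖₁ such that Σ_{v∈V} w_v Δ_v ζ_v ≥ η²/4. -/
open Finset

lemma gradTV_convex {V : Type*} [Fintype V] [DecidableEq V]
    (G : SimpleGraph V) [DecidableRel G.Adj] (a b : V → ℝ) (t : ℝ)
    (ht0 : 0 ≤ t) (ht1 : t ≤ 1) :
    gradTV G (fun v => t * a v + (1 - t) * b v) ≤ t * gradTV G a + (1 - t) * gradTV G b := by
  unfold gradTV
  rw [Finset.mul_sum, Finset.mul_sum, ← Finset.sum_add_distrib]
  refine Finset.sum_le_sum fun e _ => ?_
  induction e using Sym2.ind with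
  | _ u v =>
    simp only [Sym2.lift_mk]
    have h : t * a u + (1 - t) * b u - (t * a v + (1 - t) * b v)
        = t * (a u - a v) + (1 - t) * (b u - b v) := by ring
    rw [h]
    calc |t * (a u - a v) + (1 - t) * (b u - b v)|
        ≤ |t * (a u - a v)| + |(1 - t) * (b u - b v)| := abs_add_le _ _
      _ = t * |a u - a v| + (1 - t) * |b u - b v| := by
          rw [abs_mul, abs_mul, abs_of_nonneg ht0,
            abs_of_nonneg (show (0:ℝ) ≤ 1 - t by linarith)]

lemma gradTV_sub_le {V : Type*} [Fintype V] [DecidableEq V]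
    (G : SimpleGraph V) [DecidableRel G.Adj] (a b : V → ℝ) :
    gradTV G (fun v => a v - b v) ≤ gradTV G a + gradTV G b := by
  unfold gradTV
  rw [← Finset.sum_add_distrib]
  refine Finset.sum_le_sum fun e _ => ?_
  induction e using Sym2.ind with
  | _ u v =>
    simp only [Sym2.lift_mk]
    have h : a u - b u - (a v - b v) = (a u - a v) - (b u - b v) := by ring
    rw [h]
    exact abs_sub (a u - a v) (b u - b v)

/-- Step 2 of the analysis of the penalized graph fused lasso with
`λ = η²/(4‖∇_G θ*‖₁)`: if the estimation error exceeds `η` and every convex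
combination with the truth that lies in the `η`-ball has graph total variation
below `5‖∇_G θ*‖₁`, then some increment `Δ` of weighted norm exactly `η` and
graph total variation at most `6‖∇_G θ*‖₁` has noise inner product at least
`η²/4`. -/
theorem penalized_fused_lasso_peeling
    {V : Type*} [Fintype V] [DecidableEq V]
    (G : SimpleGraph V) [DecidableRel G.Adj]
    (w : V → ℝ) (hw : ∀ v, 0 < w v)
    (y θstar θhat : V → ℝ)
    (hJpos : 0 < gradTV G θstar)
    (η : ℝ) (hη : 0 < η)
    (lam : ℝ) (hlam : lam = η ^ 2 / (4 * gradTV G θstar))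
    (hmin : ∀ θ : V → ℝ,
      (∑ v, w v * (y v - θhat v) ^ 2) + lam * gradTV G θhat ≤
        (∑ v, w v * (y v - θ v) ^ 2) + lam * gradTV G θ)
    (hbig : η < wNorm w (fun v => θhat v - θstar v))
    (hsmallTV : ∀ t ∈ Set.Icc (0 : ℝ) 1,
      wNorm w (fun v => t * θhat v + (1 - t) * θstar v - θstar v) ≤ η →
      gradTV G (fun v => t * θhat v + (1 - t) * θstar v) < 5 * gradTV G θstar) :
    ∃ Δ : V → ℝ, wNorm w Δ = η ∧ gradTV G Δ ≤ 6 * gradTV G θstar ∧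
      η ^ 2 / 4 ≤ ∑ v, w v * Δ v * (y v - θstar v) := by
  set N := wNorm w (fun v => θhat v - θstar v) with hNdef
  have hN : 0 < N := lt_trans hη hbig
  set t := η / N with htdef
  have ht0 : 0 < t := div_pos hη hN
  have ht1 : t < 1 := (div_lt_one hN).mpr hbig
  set Δ : V → ℝ := fun v => t * (θhat v - θstar v) with hΔdef
  set θt : V → ℝ := fun v => t * θhat v + (1 - t) * θstar v with hθt
  have hΔeq : (fun v => t * θhat v + (1 - t) * θstar v - θstar v) = Δ := by
    funext v; simp only [hΔdef]; ring
  have hΔnorm : wNorm w Δ = η := by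
    have hsum : ∀ v, w v * Δ v ^ 2 = t ^ 2 * (w v * (θhat v - θstar v) ^ 2) := by
      intro v; simp only [hΔdef]; ring
    unfold wNorm
    simp_rw [hsum]
    rw [← Finset.mul_sum, Real.sqrt_mul (sq_nonneg t), Real.sqrt_sq ht0.le]
    have hNs : Real.sqrt (∑ v, w v * (θhat v - θstar v) ^ 2) = N := rfl
    rw [hNs, htdef, div_mul_cancel₀ η hN.ne']
  have hΔsq : ∑ v, w v * Δ v ^ 2 = η ^ 2 := by
    have hnn : 0 ≤ ∑ v, w v * Δ v ^ 2 :=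
      Finset.sum_nonneg fun v _ => mul_nonneg (hw v).le (sq_nonneg _)
    have := Real.sq_sqrt hnn
    rw [← this]
    have : Real.sqrt (∑ v, w v * Δ v ^ 2) = wNorm w Δ := rfl
    rw [this, hΔnorm]
  have hTVt : gradTV G θt < 5 * gradTV G θstar := by
    refine hsmallTV t (Set.mem_Icc.mpr ⟨ht0.le, ht1.le⟩) ?_
    rw [hΔeq, hΔnorm]
  have hlam_pos : 0 < lam := by
    rw [hlam]; positivity
  have hlamJ : lam * gradTV G θstar = η ^ 2 / 4 := by
    rw [hlam]; field_simp
  have hconvQ : ∑ v, w v * (y v - θt v) ^ 2 ≤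
      t * ∑ v, w v * (y v - θhat v) ^ 2 + (1 - t) * ∑ v, w v * (y v - θstar v) ^ 2 := by
    rw [Finset.mul_sum, Finset.mul_sum, ← Finset.sum_add_distrib]
    refine Finset.sum_le_sum fun v _ => ?_
    have key : t * (w v * (y v - θhat v) ^ 2) + (1 - t) * (w v * (y v - θstar v) ^ 2)
        - w v * (y v - θt v) ^ 2 = w v * (t * (1 - t) * (θhat v - θstar v) ^ 2) := by
      simp only [hθt]; ring
    have hnn : 0 ≤ w v * (t * (1 - t) * (θhat v - θstar v) ^ 2) :=
      mul_nonneg (hw v).le (mul_nonneg (mul_nonneg ht0.le (by linarith)) (sq_nonneg _))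
    linarith
  have hconvTV := gradTV_convex G θhat θstar t ht0.le ht1.le
  rw [← hθt] at hconvTV
  have hmin' := hmin θstar
  have hF : (∑ v, w v * (y v - θt v) ^ 2) + lam * gradTV G θt ≤
      (∑ v, w v * (y v - θstar v) ^ 2) + lam * gradTV G θstar := by
    nlinarith [mul_le_mul_of_nonneg_left hmin' ht0.le,
      mul_le_mul_of_nonneg_left hconvTV hlam_pos.le]
  have hexp : ∑ v, w v * (y v - θt v) ^ 2 =
      ∑ v, w v * (y v - θstar v) ^ 2 - 2 * ∑ v, w v * Δ v * (y v - θstar v)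
      + ∑ v, w v * Δ v ^ 2 := by
    rw [Finset.mul_sum, ← Finset.sum_sub_distrib, ← Finset.sum_add_distrib]
    refine Finset.sum_congr rfl fun v _ => ?_
    simp only [hθt, hΔdef]; ring
  have hTVnn := gradTV_nonneg G θt
  have hI : η ^ 2 / 4 ≤ ∑ v, w v * Δ v * (y v - θstar v) := by
    have hη2 : 0 < η ^ 2 := by positivity
    nlinarith [mul_le_mul_of_nonneg_left hTVnn hlam_pos.le]
  refine ⟨Δ, hΔnorm, ?_, hI⟩
  have := gradTV_sub_le G θt θstar
  have heq : (fun v => θt v - θstar v) = Δ := by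
    funext v; simp only [hθt, hΔdef]; ring
  rw [heq] at this
  linarith
end

section
/- Let H be a real separable Hilbert space and let δ₀, δ, δ* be H-valued Bochner-measurable random elements on a common probability space. Assume: (i) δ* is independent of δ₀; (ii) δ* has the same distribution as δ; (iii) δ has the same distribution as δ₀; (iv) E[δ₀] = 0 (Bochner expectation); and (v) E[‖δ₀‖^{2p}] < ∞ for some p > 1, with q > 1 the conjugate exponent, 1/p + 1/q = 1. If P(δ ≠ δ*) ≤ β for some β ∈ [0,1], then |E⟨δ₀, δ⟩| ≤ 2 β^{1/q} (E[‖δ₀‖^{2p}])^{1/p}. -/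
open MeasureTheory ProbabilityTheory
open scoped RealInnerProductSpace ENNReal

section Helpers

variable {Ω H : Type*} [MeasurableSpace Ω]
    [NormedAddCommGroup H] [InnerProductSpace ℝ H] [CompleteSpace H]
    [SecondCountableTopology H] [MeasurableSpace H] [BorelSpace H]

/-- `MemLp` from integrability of the `r`-th power of the norm. -/
lemma memLp_of_integrable_rpow {P : Measure Ω} {f : Ω → H}
    (hf : AEStronglyMeasurable f P) {r : ℝ} (hr : 0 < r)
    (h : Integrable (fun ω => ‖f ω‖ ^ r) P) : MemLp f (ENNReal.ofReal r) P := by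
  have h0 : ENNReal.ofReal r ≠ 0 := by simp [ENNReal.ofReal_eq_zero, not_le, hr]
  have ht : ENNReal.ofReal r ≠ ⊤ := ENNReal.ofReal_ne_top
  have := (memLp_norm_rpow_iff (q := ENNReal.ofReal r) (p := ENNReal.ofReal r) hf h0 ht).mp ?_
  · exact this
  · rw [ENNReal.div_self h0 ht, ENNReal.toReal_ofReal hr.le, memLp_one_iff_integrable]
    exact h

/-- Transfer of `MemLp` along equality of pushforward measures. -/
lemma memLp_transfer {P : Measure Ω} {f g : Ω → H} (hf : Measurable f) (hg : Measurable g)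
    (hmap : Measure.map f P = Measure.map g P) {r : ℝ≥0∞} (h : MemLp g r P) :
    MemLp f r P := by
  have hid : MemLp (id : H → H) r (Measure.map f P) := by
    rw [hmap]
    exact (memLp_map_measure_iff aestronglyMeasurable_id hg.aemeasurable).mpr h
  exact (memLp_map_measure_iff aestronglyMeasurable_id hf.aemeasurable).mp hid

/-- Transfer of integrals of powers of norms along equality of pushforward measures. -/
lemma integral_norm_rpow_transfer {P : Measure Ω} {f g : Ω → H}
    (hf : Measurable f) (hg : Measurable g)
    (hmap : Measure.map f P = Measure.map g P) {r : ℝ} (hr : 0 ≤ r) :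
    ∫ ω, ‖f ω‖ ^ r ∂P = ∫ ω, ‖g ω‖ ^ r ∂P := by
  have hcont : Continuous (fun x : H => ‖x‖ ^ r) :=
    continuous_norm.rpow_const fun x => Or.inr hr
  rw [← integral_map hf.aemeasurable hcont.aestronglyMeasurable, hmap,
    integral_map hg.aemeasurable hcont.aestronglyMeasurable]

/-- Product of two `L²` real functions is integrable. -/
lemma integrable_mul_of_memL2 {P : Measure Ω} {f g : Ω → ℝ}
    (hf : MemLp f 2 P) (hg : MemLp g 2 P) : Integrable (fun ω => f ω * g ω) P := by
  have h : MemLp (f • g) 1 P := by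
    refine MemLp.smul hg hf (hpqr := ⟨?_⟩)
    rw [inv_one]
    exact ENNReal.inv_two_add_inv_two
  rw [← memLp_one_iff_integrable]
  exact h

/-- Inner product of two `L²` functions is integrable. -/
lemma integrable_inner_of_memL2 {P : Measure Ω} {f g : Ω → H}
    (hf : MemLp f 2 P) (hg : MemLp g 2 P) :
    Integrable (fun ω => ⟪f ω, g ω⟫) P := by
  have hbound : Integrable (fun ω => ‖f ω‖ * ‖g ω‖) P :=
    integrable_mul_of_memL2 hf.norm hg.norm
  refine hbound.mono' (hf.1.inner hg.1) ?_
  filter_upwards with ω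
  exact norm_inner_le_norm _ _

end Helpers

/-- Correlation bound for coupled spatial noise in a separable Hilbert space:
if `δ*` is an independent copy of `δ` (independent of `δ₀`), `δ` has the same
distribution as the centered `δ₀`, and `P(δ ≠ δ*) ≤ β`, then
`|E⟨δ₀, δ⟩| ≤ 2 β^{1/q} (E‖δ₀‖^{2p})^{1/p}`. -/
theorem coupled_correlation_bound
    {Ω H : Type*} [MeasurableSpace Ω]
    [NormedAddCommGroup H] [InnerProductSpace ℝ H] [CompleteSpace H]
    [SecondCountableTopology H] [MeasurableSpace H] [BorelSpace H]
    (P : Measure Ω) [IsProbabilityMeasure P]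
    (δ₀ δ δstar : Ω → H)
    (hδ₀ : Measurable δ₀) (hδ : Measurable δ) (hδstar : Measurable δstar)
    (hindep : IndepFun δstar δ₀ P)
    (hsame₁ : Measure.map δstar P = Measure.map δ P)
    (hsame₂ : Measure.map δ P = Measure.map δ₀ P)
    (hmean : ∫ ω, δ₀ ω ∂P = 0)
    (p q : ℝ) (hp : 1 < p) (hq : 1 < q) (hpq : 1 / p + 1 / q = 1)
    (hmom : Integrable (fun ω => ‖δ₀ ω‖ ^ (2 * p)) P)
    (β : ℝ) (hβ : β ∈ Set.Icc (0 : ℝ) 1)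
    (hcouple : P {ω | δ ω ≠ δstar ω} ≤ ENNReal.ofReal β) :
    |∫ ω, ⟪δ₀ ω, δ ω⟫ ∂P| ≤
      2 * β ^ (1 / q) * (∫ ω, ‖δ₀ ω‖ ^ (2 * p) ∂P) ^ (1 / p) := by
  have hp0 : 0 < p := lt_trans one_pos hp
  have hq0 : 0 < q := lt_trans one_pos hq
  have h2p : (0:ℝ) < 2 * p := by linarith
  have hβ0 : 0 ≤ β := hβ.1
  set M : ℝ := ∫ ω, ‖δ₀ ω‖ ^ (2 * p) ∂P with hM
  have hM0 : 0 ≤ M := integral_nonneg fun ω => Real.rpow_nonneg (norm_nonneg _) _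
  have hmapstar : Measure.map δstar P = Measure.map δ₀ P := hsame₁.trans hsame₂
  -- ℒ^{2p} membership
  have hδ₀2p : MemLp δ₀ (ENNReal.ofReal (2 * p)) P :=
    memLp_of_integrable_rpow hδ₀.aestronglyMeasurable h2p hmom
  have hδ2p : MemLp δ (ENNReal.ofReal (2 * p)) P := memLp_transfer hδ hδ₀ hsame₂ hδ₀2p
  have hδstar2p : MemLp δstar (ENNReal.ofReal (2 * p)) P :=
    memLp_transfer hδstar hδ₀ hmapstar hδ₀2p
  have h2le : (2 : ℝ≥0∞) ≤ ENNReal.ofReal (2 * p) := by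
    rw [show (2 : ℝ≥0∞) = ENNReal.ofReal 2 by simp]
    exact ENNReal.ofReal_le_ofReal (by linarith)
  have hδ₀2 : MemLp δ₀ 2 P := hδ₀2p.mono_exponent h2le
  have hδ2 : MemLp δ 2 P := hδ2p.mono_exponent h2le
  have hδstar2 : MemLp δstar 2 P := hδstar2p.mono_exponent h2le
  have hδ₀1 : Integrable δ₀ P :=
    memLp_one_iff_integrable.mp (hδ₀2.mono_exponent (by norm_num))
  -- the independent-copy term vanishes
  have hzero : ∫ ω, ⟪δ₀ ω, δstar ω⟫ ∂P = 0 := by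
    have hpair : Measure.map (fun ω => (δstar ω, δ₀ ω)) P =
        (Measure.map δstar P).prod (Measure.map δ₀ P) :=
      (indepFun_iff_map_prod_eq_prod_map_map hδstar.aemeasurable hδ₀.aemeasurable).mp hindep
    have hcont : Continuous (fun z : H × H => ⟪z.2, z.1⟫) :=
      continuous_inner.comp (continuous_snd.prodMk continuous_fst)
    have hint : Integrable (fun ω => ⟪δ₀ ω, δstar ω⟫) P :=
      integrable_inner_of_memL2 hδ₀2 hδstar2
    have h1 : ∫ ω, ⟪δ₀ ω, δstar ω⟫ ∂P =
        ∫ z : H × H, ⟪z.2, z.1⟫ ∂((Measure.map δstar P).prod (Measure.map δ₀ P)) := by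
      rw [← hpair, integral_map (hδstar.prodMk hδ₀).aemeasurable hcont.aestronglyMeasurable]
    have hint' : Integrable (fun z : H × H => ⟪z.2, z.1⟫)
        ((Measure.map δstar P).prod (Measure.map δ₀ P)) := by
      rw [← hpair]
      exact (integrable_map_measure hcont.aestronglyMeasurable
        (hδstar.prodMk hδ₀).aemeasurable).mpr hint
    have hid : Integrable (fun y : H => y) (Measure.map δ₀ P) :=
      (integrable_map_measure aestronglyMeasurable_id hδ₀.aemeasurable).mpr hδ₀1
    have hmean' : ∫ y, y ∂(Measure.map δ₀ P) = 0 :=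
      (integral_map (f := fun y : H => y) hδ₀.aemeasurable aestronglyMeasurable_id).trans hmean
    rw [h1, integral_prod _ hint']
    have hxz : ∀ x : H, ∫ y, ⟪y, x⟫ ∂(Measure.map δ₀ P) = 0 := by
      intro x
      have : ∀ y : H, ⟪y, x⟫ = ⟪x, y⟫ := fun y => real_inner_comm _ _
      simp_rw [this]
      rw [integral_inner hid x, hmean', inner_zero_right]
    simp [hxz]
  -- the coupling set
  have hAmeas : MeasurableSet {ω | δ ω ≠ δstar ω} := by
    have h := StronglyMeasurable.measurableSet_eq_fun hδ.stronglyMeasurable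
      hδstar.stronglyMeasurable
    simpa [Set.compl_setOf] using h.compl
  set A : Set Ω := {ω | δ ω ≠ δstar ω} with hADef
  have hPA : (P A).toReal ≤ β := ENNReal.toReal_le_of_le_ofReal hβ0 hcouple
  have hpq' : Real.HolderConjugate p q := Real.holderConjugate_iff.mpr ⟨hp, by rw [← one_div, ← one_div]; exact hpq⟩
  have h22 : Real.HolderConjugate 2 2 := Real.holderConjugate_iff.mpr ⟨one_lt_two, by norm_num⟩
  have hofReal2 : (2 : ℝ≥0∞) = ENNReal.ofReal 2 := by simp
  -- the key one-term estimate
  have key : ∀ g : Ω → H, Measurable g → Measure.map g P = Measure.map δ₀ P →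
      ∫ ω, A.indicator (fun ω => ‖δ₀ ω‖ * ‖g ω‖) ω ∂P ≤ β ^ (1/q) * M ^ (1/p) := by
    intro g hg hmapg
    have hg2p : MemLp g (ENNReal.ofReal (2*p)) P := memLp_transfer hg hδ₀ hmapg hδ₀2p
    have hMg : ∫ ω, ‖g ω‖ ^ (2*p) ∂P = M :=
      integral_norm_rpow_transfer hg hδ₀ hmapg h2p.le
    have hdiv : ENNReal.ofReal (2*p) / ENNReal.ofReal p = 2 := by
      rw [← ENNReal.ofReal_div_of_pos hp0, mul_div_assoc, div_self hp0.ne', mul_one, hofReal2]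
    have hpow2 : ∀ (f : Ω → H), MemLp f (ENNReal.ofReal (2*p)) P →
        MemLp (fun ω => ‖f ω‖ ^ p) 2 P := by
      intro f hf
      have h1 := hf.norm_rpow_div (ENNReal.ofReal p)
      rwa [hdiv, ENNReal.toReal_ofReal hp0.le] at h1
    have hL2a : MemLp (fun ω => ‖δ₀ ω‖ ^ p) 2 P := hpow2 δ₀ hδ₀2p
    have hL2b : MemLp (fun ω => ‖g ω‖ ^ p) 2 P := hpow2 g hg2p
    -- Cauchy–Schwarz step
    have hCS : ∫ ω, ‖δ₀ ω‖ ^ p * ‖g ω‖ ^ p ∂P ≤ M := by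
      have hh := integral_mul_le_Lp_mul_Lq_of_nonneg h22
        (f := fun ω => ‖δ₀ ω‖ ^ p) (g := fun ω => ‖g ω‖ ^ p)
        (Filter.Eventually.of_forall fun ω => Real.rpow_nonneg (norm_nonneg _) _)
        (Filter.Eventually.of_forall fun ω => Real.rpow_nonneg (norm_nonneg _) _)
        (hofReal2 ▸ hL2a) (hofReal2 ▸ hL2b)
      have e1 : ∫ ω, (‖δ₀ ω‖ ^ p) ^ (2:ℝ) ∂P = M := by
        rw [hM]
        refine integral_congr_ae (Filter.Eventually.of_forall fun ω => ?_)
        dsimp only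
        rw [← Real.rpow_mul (norm_nonneg _), mul_comm p 2]
      have e2 : ∫ ω, (‖g ω‖ ^ p) ^ (2:ℝ) ∂P = ∫ ω, ‖δ₀ ω‖ ^ (2*p) ∂P := by
        rw [← hM, ← hMg]
        refine integral_congr_ae (Filter.Eventually.of_forall fun ω => ?_)
        dsimp only
        rw [← Real.rpow_mul (norm_nonneg _), mul_comm p 2]
      rw [e1, e2, ← hM] at hh
      have eM : M ^ ((1:ℝ)/2) * M ^ ((1:ℝ)/2) = M := by
        rw [← Real.rpow_add_of_nonneg hM0 (by norm_num) (by norm_num)]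
        norm_num
      rw [eM] at hh
      exact hh
    have hprod_int : Integrable (fun ω => ‖δ₀ ω‖ ^ p * ‖g ω‖ ^ p) P :=
      integrable_mul_of_memL2 hL2a hL2b
    have hprodLp : MemLp (fun ω => ‖δ₀ ω‖ * ‖g ω‖) (ENNReal.ofReal p) P := by
      apply memLp_of_integrable_rpow (hδ₀.norm.mul hg.norm).aestronglyMeasurable hp0
      refine hprod_int.congr (Filter.Eventually.of_forall fun ω => ?_)
      dsimp only
      rw [Pi.mul_apply, Real.norm_of_nonneg (mul_nonneg (norm_nonneg _) (norm_nonneg _)),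
        Real.mul_rpow (norm_nonneg _) (norm_nonneg _)]
    have hindLp : MemLp (A.indicator (fun _ => (1:ℝ))) (ENNReal.ofReal q) P :=
      memLp_indicator_const _ hAmeas 1 (Or.inr (measure_ne_top P A))
    have hHolder := integral_mul_le_Lp_mul_Lq_of_nonneg hpq'
      (f := fun ω => ‖δ₀ ω‖ * ‖g ω‖) (g := A.indicator fun _ => (1:ℝ))
      (Filter.Eventually.of_forall fun ω => mul_nonneg (norm_nonneg _) (norm_nonneg _))
      (Filter.Eventually.of_forall fun ω => Set.indicator_nonneg (fun _ _ => zero_le_one) ω)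
      hprodLp hindLp
    have hLHS : ∫ ω, (‖δ₀ ω‖ * ‖g ω‖) * A.indicator (fun _ => (1:ℝ)) ω ∂P
        = ∫ ω, A.indicator (fun ω => ‖δ₀ ω‖ * ‖g ω‖) ω ∂P := by
      refine integral_congr_ae (Filter.Eventually.of_forall fun ω => ?_)
      by_cases hω : ω ∈ A <;>
        simp [Set.indicator_of_mem, Set.indicator_of_notMem, hω]
    have hfac1 : (∫ ω, (‖δ₀ ω‖ * ‖g ω‖) ^ p ∂P) ^ (1/p) ≤ M ^ (1/p) := by
      refine Real.rpow_le_rpow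
        (integral_nonneg fun ω => Real.rpow_nonneg
          (mul_nonneg (norm_nonneg _) (norm_nonneg _)) _) ?_ (by positivity)
      calc ∫ ω, (‖δ₀ ω‖ * ‖g ω‖) ^ p ∂P
          = ∫ ω, ‖δ₀ ω‖ ^ p * ‖g ω‖ ^ p ∂P := by
            refine integral_congr_ae (Filter.Eventually.of_forall fun ω => ?_)
            dsimp only
            rw [Real.mul_rpow (norm_nonneg _) (norm_nonneg _)]
        _ ≤ M := hCS
    have hfac2 : (∫ ω, (A.indicator (fun _ => (1:ℝ)) ω) ^ q ∂P) ^ (1/q) ≤ β ^ (1/q) := by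
      refine Real.rpow_le_rpow
        (integral_nonneg fun ω => Real.rpow_nonneg
          (Set.indicator_nonneg (fun _ _ => zero_le_one) ω) _) ?_ (by positivity)
      have hind : ∀ ω, (A.indicator (fun _ => (1:ℝ)) ω) ^ q
          = A.indicator (fun _ => (1:ℝ)) ω := by
        intro ω
        by_cases hω : ω ∈ A <;>
          simp [hω, Real.one_rpow, Real.zero_rpow hq0.ne']
      calc ∫ ω, (A.indicator (fun _ => (1:ℝ)) ω) ^ q ∂P
          = ∫ ω, A.indicator (fun _ => (1:ℝ)) ω ∂P := by
            refine integral_congr_ae (Filter.Eventually.of_forall fun ω => hind ω)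
        _ = (P A).toReal • (1:ℝ) := integral_indicator_const (1:ℝ) hAmeas
        _ ≤ β := by simpa using hPA
    calc ∫ ω, A.indicator (fun ω => ‖δ₀ ω‖ * ‖g ω‖) ω ∂P
        = ∫ ω, (‖δ₀ ω‖ * ‖g ω‖) * A.indicator (fun _ => (1:ℝ)) ω ∂P := hLHS.symm
      _ ≤ (∫ ω, (‖δ₀ ω‖ * ‖g ω‖) ^ p ∂P) ^ (1/p) *
          (∫ ω, (A.indicator (fun _ => (1:ℝ)) ω) ^ q ∂P) ^ (1/q) := hHolder
      _ ≤ M ^ (1/p) * β ^ (1/q) := by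
          refine mul_le_mul hfac1 hfac2 (Real.rpow_nonneg
            (integral_nonneg fun ω => Real.rpow_nonneg
              (Set.indicator_nonneg (fun _ _ => zero_le_one) ω) _) _) (by positivity)
      _ = β ^ (1/q) * M ^ (1/p) := mul_comm _ _
  -- combine everything
  have hint_δ : Integrable (fun ω => ⟪δ₀ ω, δ ω⟫) P := integrable_inner_of_memL2 hδ₀2 hδ2
  have hint_δstar : Integrable (fun ω => ⟪δ₀ ω, δstar ω⟫) P :=
    integrable_inner_of_memL2 hδ₀2 hδstar2
  have hsplit : ∫ ω, ⟪δ₀ ω, δ ω⟫ ∂P = ∫ ω, ⟪δ₀ ω, δ ω - δstar ω⟫ ∂P := by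
    have hfun : (fun ω => ⟪δ₀ ω, δ ω - δstar ω⟫)
        = fun ω => ⟪δ₀ ω, δ ω⟫ - ⟪δ₀ ω, δstar ω⟫ :=
      funext fun ω => inner_sub_right _ _ _
    rw [hfun, integral_sub hint_δ hint_δstar, hzero, sub_zero]
  set f1 : Ω → ℝ := A.indicator (fun ω => ‖δ₀ ω‖ * ‖δ ω‖) with hf1Def
  set f2 : Ω → ℝ := A.indicator (fun ω => ‖δ₀ ω‖ * ‖δstar ω‖) with hf2Def
  have hf1int : Integrable f1 P :=
    (integrable_mul_of_memL2 hδ₀2.norm hδ2.norm).indicator hAmeas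
  have hf2int : Integrable f2 P :=
    (integrable_mul_of_memL2 hδ₀2.norm hδstar2.norm).indicator hAmeas
  have habs : |∫ ω, ⟪δ₀ ω, δ ω - δstar ω⟫ ∂P| ≤ ∫ ω, (f1 ω + f2 ω) ∂P := by
    have hbd : ∀ ω, ‖⟪δ₀ ω, δ ω - δstar ω⟫‖ ≤ f1 ω + f2 ω := by
      intro ω
      by_cases hω : ω ∈ A
      · rw [hf1Def, hf2Def]
        simp only [Set.indicator_of_mem hω]
        calc ‖⟪δ₀ ω, δ ω - δstar ω⟫‖ ≤ ‖δ₀ ω‖ * ‖δ ω - δstar ω‖ := norm_inner_le_norm _ _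
          _ ≤ ‖δ₀ ω‖ * (‖δ ω‖ + ‖δstar ω‖) :=
            mul_le_mul_of_nonneg_left (norm_sub_le _ _) (norm_nonneg _)
          _ = ‖δ₀ ω‖ * ‖δ ω‖ + ‖δ₀ ω‖ * ‖δstar ω‖ := mul_add _ _ _
      · have heq : δ ω = δstar ω := by
          by_contra hne
          exact hω hne
        rw [hf1Def, hf2Def]
        simp [Set.indicator_of_notMem hω, heq]
    calc |∫ ω, ⟪δ₀ ω, δ ω - δstar ω⟫ ∂P| = ‖∫ ω, ⟪δ₀ ω, δ ω - δstar ω⟫ ∂P‖ :=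
        (Real.norm_eq_abs _).symm
      _ ≤ ∫ ω, ‖⟪δ₀ ω, δ ω - δstar ω⟫‖ ∂P := norm_integral_le_integral_norm _
      _ ≤ ∫ ω, (f1 ω + f2 ω) ∂P := by
          refine integral_mono_of_nonneg (Filter.Eventually.of_forall fun ω => norm_nonneg _)
            (hf1int.add hf2int) (Filter.Eventually.of_forall fun ω => hbd ω)
  have h1 := key δ hδ hsame₂
  have h2 := key δstar hδstar hmapstar
  calc |∫ ω, ⟪δ₀ ω, δ ω⟫ ∂P| = |∫ ω, ⟪δ₀ ω, δ ω - δstar ω⟫ ∂P| := by rw [hsplit]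
    _ ≤ ∫ ω, (f1 ω + f2 ω) ∂P := habs
    _ = (∫ ω, f1 ω ∂P) + ∫ ω, f2 ω ∂P := integral_add hf1int hf2int
    _ ≤ β ^ (1/q) * M ^ (1/p) + β ^ (1/q) * M ^ (1/p) := add_le_add h1 h2
    _ = 2 * β ^ (1/q) * M ^ (1/p) := by ring
end

section
/- Let H be a real separable Hilbert space, let p > 1 with conjugate exponent q (1/p + 1/q = 1), let C_β > 0, and let δ₁, …, δ_n be identically distributed H-valued Bochner-measurable random elements on a common probability space with E[δ₁] = 0 and M := (E[‖δ₁‖^{2p}])^{1/p} < ∞. If |E⟨δ_i, δ_j⟩| ≤ 2 e^{−C_β (j−i)/q} M for all 1 ≤ i < j ≤ n, then E[ ‖(1/n) Σ_{i=1}^n δ_i‖² ] ≤ (1/n) ( E[‖δ₁‖²] + 4 M Σ_{l=1}^∞ e^{−C_β l/q} ) = (1/n) ( E[‖δ₁‖²] + 4M / (e^{C_β/q} − 1) ). -/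
open MeasureTheory ProbabilityTheory Finset
open scoped RealInnerProductSpace

private lemma sum_comp_le_tsum {g : ℕ → ℝ} (hg0 : ∀ l, 0 ≤ g l) (hg : Summable g)
    (A : Finset ℕ) (φ : ℕ → ℕ) (hφ : ∀ a ∈ A, ∀ b ∈ A, φ a = φ b → a = b) :
    ∑ j ∈ A, g (φ j) ≤ ∑' l, g l := by
  rw [← Finset.sum_image hφ]
  exact Summable.sum_le_tsum _ (fun l _ => hg0 l) hg

/-- Second-moment bound for the average of dependent identically distributed
centered noise in a separable Hilbert space: if the pairwise correlations decay
exponentially, `|E⟨δ_i, δ_j⟩| ≤ 2 e^{-C_β (j-i)/q} M`, then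
`E‖(1/n) Σ_{i=1}^n δ_i‖² ≤ (1/n)(E‖δ₁‖² + 4 M Σ_{l≥1} e^{-C_β l/q})`, and the
geometric series equals `1/(e^{C_β/q} - 1)`. -/
theorem dependent_average_second_moment
    {Ω H : Type*} [MeasurableSpace Ω]
    [NormedAddCommGroup H] [InnerProductSpace ℝ H] [CompleteSpace H]
    [SecondCountableTopology H] [MeasurableSpace H] [BorelSpace H]
    (P : Measure Ω) [IsProbabilityMeasure P]
    (n : ℕ) (hn : 0 < n)
    (δ : ℕ → Ω → H) (hδmeas : ∀ i, Measurable (δ i))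
    (hident : ∀ i ∈ Finset.Icc 1 n, Measure.map (δ i) P = Measure.map (δ 1) P)
    (hmean : ∫ ω, δ 1 ω ∂P = 0)
    (p q : ℝ) (hp : 1 < p) (hq : 1 < q) (hpq : 1 / p + 1 / q = 1)
    (Cβ : ℝ) (hCβ : 0 < Cβ)
    (hmom : Integrable (fun ω => ‖δ 1 ω‖ ^ (2 * p)) P)
    (M : ℝ) (hM : M = (∫ ω, ‖δ 1 ω‖ ^ (2 * p) ∂P) ^ (1 / p))
    (hcorr : ∀ i j : ℕ, 1 ≤ i → i < j → j ≤ n →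
      |∫ ω, ⟪δ i ω, δ j ω⟫ ∂P| ≤ 2 * Real.exp (-Cβ * ((j : ℝ) - i) / q) * M) :
    (∫ ω, ‖(n : ℝ)⁻¹ • ∑ i ∈ Finset.Icc 1 n, δ i ω‖ ^ 2 ∂P) ≤
      (1 / n) * ((∫ ω, ‖δ 1 ω‖ ^ 2 ∂P)
        + 4 * M * ∑' l : ℕ, Real.exp (-Cβ * ((l : ℝ) + 1) / q)) ∧
    (∑' l : ℕ, Real.exp (-Cβ * ((l : ℝ) + 1) / q)) = 1 / (Real.exp (Cβ / q) - 1) := by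
  -- notation
  set S := Finset.Icc 1 n with hS
  set g : ℕ → ℝ := fun l => Real.exp (-Cβ * ((l : ℝ) + 1) / q) with hg
  set T : ℝ := ∑' l : ℕ, g l with hT
  have hqpos : 0 < Cβ / q := by positivity
  have hg0 : ∀ l, 0 ≤ g l := fun l => (Real.exp_pos _).le
  have hEQ : ∀ l : ℕ, g l = Real.exp (-(Cβ/q)) * Real.exp (-(Cβ/q)) ^ l := by
    intro l
    rw [hg, ← Real.exp_nat_mul, ← Real.exp_add]
    ring_nf
  have hr : Real.exp (-(Cβ/q)) < 1 := Real.exp_lt_one_iff.mpr (by linarith)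
  have hr0 : 0 < Real.exp (-(Cβ/q)) := Real.exp_pos _
  have hgsum : Summable g := by
    rw [funext hEQ]
    exact (summable_geometric_of_lt_one hr0.le hr).mul_left _
  -- part (b)
  have partb : T = 1 / (Real.exp (Cβ / q) - 1) := by
    rw [hT]
    simp_rw [hEQ]
    rw [tsum_mul_left, tsum_geometric_of_lt_one hr0.le hr]
    have h2 : Real.exp (Cβ/q) - 1 ≠ 0 := by
      have : 1 < Real.exp (Cβ/q) := by
        calc (1:ℝ) = Real.exp 0 := Real.exp_zero.symm
        _ < _ := Real.exp_lt_exp.mpr hqpos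
      linarith
    have h3 : (1:ℝ) - Real.exp (-(Cβ/q)) ≠ 0 := by linarith
    rw [Real.exp_neg]
    have h1 : Real.exp (Cβ/q) ≠ 0 := (Real.exp_pos _).ne'
    field_simp
  refine ⟨?_, partb⟩
  -- M nonneg
  have hMnn : 0 ≤ M := by
    rw [hM]
    apply Real.rpow_nonneg
    exact integral_nonneg fun ω => Real.rpow_nonneg (norm_nonneg _) _
  -- measurability of norms squared
  have hnormsq_meas : Measurable (fun x : H => ‖x‖ ^ 2) := measurable_norm.pow_const 2
  -- integrability of ‖δ 1‖^2
  have hbnd : ∀ x : H, ‖x‖ ^ 2 ≤ 1 + ‖x‖ ^ (2 * p) := by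
    intro x
    have h2p : (2:ℝ) ≤ 2 * p := by nlinarith
    have hrp : (0:ℝ) ≤ ‖x‖ ^ (2*p) := Real.rpow_nonneg (norm_nonneg _) _
    rcases le_or_gt ‖x‖ 1 with h | h
    · have : ‖x‖ ^ 2 ≤ 1 := pow_le_one₀ (norm_nonneg _) h
      linarith
    · have h1 : ‖x‖ ^ ((2:ℕ):ℝ) ≤ ‖x‖ ^ (2*p) := by
        apply Real.rpow_le_rpow_of_exponent_le h.le
        norm_num; linarith
      rw [Real.rpow_natCast] at h1
      linarith
  have hInt1 : Integrable (fun ω => ‖δ 1 ω‖ ^ 2) P := by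
    refine Integrable.mono ((integrable_const (1:ℝ)).add hmom)
      (hnormsq_meas.comp (hδmeas 1)).aestronglyMeasurable ?_
    filter_upwards with ω
    have hrp : (0:ℝ) ≤ ‖δ 1 ω‖ ^ (2*p) := Real.rpow_nonneg (norm_nonneg _) _
    simp only [Pi.add_apply]
    rw [Real.norm_eq_abs, Real.norm_eq_abs,
      abs_of_nonneg (by positivity : (0:ℝ) ≤ ‖δ 1 ω‖ ^ 2),
      abs_of_nonneg (by linarith : (0:ℝ) ≤ 1 + ‖δ 1 ω‖ ^ (2 * p))]
    exact hbnd _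
  -- transfer integrability / integrals to δ i via identical distribution
  have hInti : ∀ i ∈ S, Integrable (fun ω => ‖δ i ω‖ ^ 2) P := by
    intro i hi
    have h1 : Integrable (fun x : H => ‖x‖ ^ 2) (Measure.map (δ 1) P) :=
      (integrable_map_measure hnormsq_meas.aestronglyMeasurable
        (hδmeas 1).aemeasurable).mpr hInt1
    rw [← hident i hi] at h1
    exact (integrable_map_measure hnormsq_meas.aestronglyMeasurable
      (hδmeas i).aemeasurable).mp h1
  have hEi : ∀ i ∈ S, ∫ ω, ‖δ i ω‖ ^ 2 ∂P = ∫ ω, ‖δ 1 ω‖ ^ 2 ∂P := by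
    intro i hi
    rw [show (∫ ω, ‖δ i ω‖ ^ 2 ∂P) = ∫ x, ‖x‖ ^ 2 ∂(Measure.map (δ i) P) from
      (integral_map (hδmeas i).aemeasurable hnormsq_meas.aestronglyMeasurable).symm,
      hident i hi,
      integral_map (hδmeas 1).aemeasurable hnormsq_meas.aestronglyMeasurable]
  -- integrability of inner products
  have hIntij : ∀ i ∈ S, ∀ j ∈ S, Integrable (fun ω => ⟪δ i ω, δ j ω⟫) P := by
    intro i hi j hj
    refine Integrable.mono (((hInti i hi).add (hInti j hj)).div_const 2)
      ((hδmeas i).inner (hδmeas j)).aestronglyMeasurable ?_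
    filter_upwards with ω
    simp only [Pi.add_apply, Real.norm_eq_abs]
    have h1 : |⟪δ i ω, δ j ω⟫| ≤ ‖δ i ω‖ * ‖δ j ω‖ := abs_real_inner_le_norm _ _
    have h2 : ‖δ i ω‖ * ‖δ j ω‖ ≤ (‖δ i ω‖ ^ 2 + ‖δ j ω‖ ^ 2) / 2 := by
      nlinarith [sq_nonneg (‖δ i ω‖ - ‖δ j ω‖)]
    have h3 : (0:ℝ) ≤ (‖δ i ω‖ ^ 2 + ‖δ j ω‖ ^ 2) / 2 := by positivity
    rw [abs_of_nonneg h3]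
    linarith
  -- pointwise expansion
  have hpoint : ∀ ω, ‖(n : ℝ)⁻¹ • ∑ i ∈ S, δ i ω‖ ^ 2
      = ((n:ℝ)⁻¹)^2 * ∑ i ∈ S, ∑ j ∈ S, ⟪δ i ω, δ j ω⟫ := by
    intro ω
    have h : ‖∑ i ∈ S, δ i ω‖ ^ 2 = ∑ i ∈ S, ∑ j ∈ S, ⟪δ i ω, δ j ω⟫ := by
      rw [← real_inner_self_eq_norm_sq, sum_inner]
      simp only [inner_sum]
    rw [norm_smul, mul_pow, h]
    simp [Real.norm_eq_abs, sq_abs]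
  -- the integral as double sum
  have hintexp : (∫ ω, ‖(n : ℝ)⁻¹ • ∑ i ∈ S, δ i ω‖ ^ 2 ∂P)
      = ((n:ℝ)⁻¹)^2 * ∑ i ∈ S, ∑ j ∈ S, ∫ ω, ⟪δ i ω, δ j ω⟫ ∂P := by
    simp_rw [hpoint]
    rw [integral_const_mul, integral_finset_sum S
      (fun i hi => integrable_finset_sum S (fun j hj => hIntij i hi j hj))]
    congr 1
    exact Finset.sum_congr rfl fun i hi =>
      integral_finset_sum S (fun j hj => hIntij i hi j hj)
  -- bound each row of the double sum
  have hrow : ∀ i ∈ S, ∑ j ∈ S, ∫ ω, ⟪δ i ω, δ j ω⟫ ∂P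
      ≤ (∫ ω, ‖δ 1 ω‖ ^ 2 ∂P) + 4 * M * T := by
    intro i hi
    rw [← Finset.add_sum_erase S _ hi]
    have hdiag : ∫ ω, ⟪δ i ω, δ i ω⟫ ∂P = ∫ ω, ‖δ 1 ω‖ ^ 2 ∂P := by
      rw [← hEi i hi]
      exact integral_congr_ae (Filter.Eventually.of_forall fun ω =>
        real_inner_self_eq_norm_sq _)
    rw [hdiag]
    have hoff : ∑ j ∈ S.erase i, ∫ ω, ⟪δ i ω, δ j ω⟫ ∂P ≤ 4 * M * T := by
      have hterm : ∀ j ∈ S.erase i, ∫ ω, ⟪δ i ω, δ j ω⟫ ∂P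
          ≤ 2 * M * g (if j < i then i - j - 1 else j - i - 1) := by
        intro j hj
        have hji : j ≠ i := Finset.ne_of_mem_erase hj
        have hjS : j ∈ S := Finset.mem_of_mem_erase hj
        rw [hS, Finset.mem_Icc] at hi hjS
        by_cases hlt : j < i
        · have hcast : -Cβ * ((i:ℝ) - j) / q = -Cβ * (((i - j - 1 : ℕ):ℝ) + 1) / q := by
            congr 2
            rw [show i - j - 1 = i - (j+1) from by omega, Nat.cast_sub (by omega)]
            push_cast; ring
          have h1 := hcorr j i hjS.1 hlt hi.2
          have h2 : ∫ ω, ⟪δ i ω, δ j ω⟫ ∂P = ∫ ω, ⟪δ j ω, δ i ω⟫ ∂P :=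
            integral_congr_ae (Filter.Eventually.of_forall fun ω => real_inner_comm _ _)
          rw [if_pos hlt, h2, hg]
          calc ∫ ω, ⟪δ j ω, δ i ω⟫ ∂P ≤ |∫ ω, ⟪δ j ω, δ i ω⟫ ∂P| := le_abs_self _
          _ ≤ 2 * Real.exp (-Cβ * ((i:ℝ) - j) / q) * M := h1
          _ = 2 * M * Real.exp (-Cβ * (((i - j - 1 : ℕ):ℝ) + 1) / q) := by
              rw [hcast]; ring
        · have hgt : i < j := lt_of_le_of_ne (not_lt.mp hlt) (Ne.symm hji)
          have hcast : -Cβ * ((j:ℝ) - i) / q = -Cβ * (((j - i - 1 : ℕ):ℝ) + 1) / q := by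
            congr 2
            rw [show j - i - 1 = j - (i+1) from by omega, Nat.cast_sub (by omega)]
            push_cast; ring
          have h1 := hcorr i j hi.1 hgt hjS.2
          rw [if_neg hlt, hg]
          calc ∫ ω, ⟪δ i ω, δ j ω⟫ ∂P ≤ |∫ ω, ⟪δ i ω, δ j ω⟫ ∂P| := le_abs_self _
          _ ≤ 2 * Real.exp (-Cβ * ((j:ℝ) - i) / q) * M := h1
          _ = 2 * M * Real.exp (-Cβ * (((j - i - 1 : ℕ):ℝ) + 1) / q) := by
              rw [hcast]; ring
      calc ∑ j ∈ S.erase i, ∫ ω, ⟪δ i ω, δ j ω⟫ ∂P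
          ≤ ∑ j ∈ S.erase i, 2 * M * g (if j < i then i - j - 1 else j - i - 1) :=
            Finset.sum_le_sum hterm
      _ = 2 * M * ∑ j ∈ S.erase i, g (if j < i then i - j - 1 else j - i - 1) := by
            rw [Finset.mul_sum]
      _ ≤ 2 * M * (2 * T) := by
            apply mul_le_mul_of_nonneg_left _ (by positivity)
            rw [← Finset.sum_filter_add_sum_filter_not (S.erase i) (fun j => j < i)]
            have hA : ∑ j ∈ (S.erase i).filter (fun j => j < i),
                g (if j < i then i - j - 1 else j - i - 1) ≤ T := by
              rw [Finset.sum_congr rfl (fun j hj => by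
                rw [if_pos (Finset.mem_filter.mp hj).2])]
              apply sum_comp_le_tsum hg0 hgsum
              intro a ha b hb hab
              have ha' := (Finset.mem_filter.mp ha).2
              have hb' := (Finset.mem_filter.mp hb).2
              omega
            have hB : ∑ j ∈ (S.erase i).filter (fun j => ¬ j < i),
                g (if j < i then i - j - 1 else j - i - 1) ≤ T := by
              rw [Finset.sum_congr rfl (fun j hj => by
                rw [if_neg (Finset.mem_filter.mp hj).2])]
              apply sum_comp_le_tsum hg0 hgsum
              intro a ha b hb hab
              have ha' := (Finset.mem_filter.mp ha).2
              have hb' := (Finset.mem_filter.mp hb).2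
              have ha'' := Finset.ne_of_mem_erase (Finset.mem_filter.mp ha).1
              have hb'' := Finset.ne_of_mem_erase (Finset.mem_filter.mp hb).1
              omega
            linarith
      _ = 4 * M * T := by ring
    linarith
  -- combine
  have hcard : (S.card : ℝ) = n := by rw [hS, Nat.card_Icc]; simp
  have htot : ∑ i ∈ S, ∑ j ∈ S, ∫ ω, ⟪δ i ω, δ j ω⟫ ∂P
      ≤ (n:ℝ) * ((∫ ω, ‖δ 1 ω‖ ^ 2 ∂P) + 4 * M * T) := by
    calc ∑ i ∈ S, ∑ j ∈ S, ∫ ω, ⟪δ i ω, δ j ω⟫ ∂P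
        ≤ ∑ i ∈ S, ((∫ ω, ‖δ 1 ω‖ ^ 2 ∂P) + 4 * M * T) := Finset.sum_le_sum hrow
    _ = (n:ℝ) * ((∫ ω, ‖δ 1 ω‖ ^ 2 ∂P) + 4 * M * T) := by
        rw [Finset.sum_const, nsmul_eq_mul, hcard]
  rw [hintexp]
  have hn' : (0:ℝ) < n := by exact_mod_cast hn
  calc ((n:ℝ)⁻¹)^2 * ∑ i ∈ S, ∑ j ∈ S, ∫ ω, ⟪δ i ω, δ j ω⟫ ∂P
      ≤ ((n:ℝ)⁻¹)^2 * ((n:ℝ) * ((∫ ω, ‖δ 1 ω‖ ^ 2 ∂P) + 4 * M * T)) :=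
        mul_le_mul_of_nonneg_left htot (by positivity)
  _ = (1 / n) * ((∫ ω, ‖δ 1 ω‖ ^ 2 ∂P) + 4 * M * T) := by
        field_simp
end
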